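/- For every unitary matrix U ∈ U(d), the minimax equality max_{E ∈ 𝒟𝒰_d} min_{ρ ∈ 𝒟(ℂ^d)} |Tr(ρUE)| = min_{ρ ∈ 𝒟(ℂ^d)} max_{E ∈ 𝒟𝒰_d} |Tr(ρUE)| holds (both optima are attained by compactness). -/

import Mathlib

open Matrix MeasureTheory
open scoped ENNReal ComplexOrder

noncomputable section

namespace Paper

/-- The old Mathlib `Matrix.PosSemidef.sqrt` (removed since), with its old definition. -/
noncomputable def psdSqrt {n : Type*} [Fintype n] [DecidableEq n] {A : Matrix n n ℂ}
    (hA : A.PosSemidef) : Matrix n n ℂ :=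
  (hA.1.eigenvectorUnitary : Matrix n n ℂ) * diagonal ((↑) ∘ (hA.1.eigenvalues · |>.sqrt)) *
    (star hA.1.eigenvectorUnitary : Matrix n n ℂ)

/-- Trace norm `‖X‖₁ = Tr √(Xᴴ X)`. -/
noncomputable def traceNorm {n : Type*} [Fintype n] [DecidableEq n] (X : Matrix n n ℂ) : ℝ :=
  ((psdSqrt (Matrix.posSemidef_conjTranspose_mul_self X)).trace).re

/-- `(S ⊗ id)(X)`, the map `S` applied to the first tensor factor. -/
def tensorApplyLeft {n n' m : Type*} [Fintype n] [Fintype m]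
    (S : Matrix n n ℂ →ₗ[ℂ] Matrix n' n' ℂ)
    (X : Matrix (n × m) (n × m) ℂ) : Matrix (n' × m) (n' × m) ℂ :=
  Matrix.of fun p q => S (Matrix.of fun i j => X (i, p.2) (j, q.2)) p.1 q.1

/-- Diamond norm of a linear map between matrix spaces. -/
noncomputable def diamondNorm {n n' : Type*} [Fintype n] [DecidableEq n] [Fintype n']
    [DecidableEq n'] (S : Matrix n n ℂ →ₗ[ℂ] Matrix n' n' ℂ) : ℝ :=
  sSup { t : ℝ | ∃ (k : ℕ) (X : Matrix (n × Fin (k + 1)) (n × Fin (k + 1)) ℂ),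
    traceNorm X = 1 ∧ t = traceNorm (tensorApplyLeft S X) }

/-- The completely dephasing channel in the standard basis. -/
def dephaseMap (n : Type*) [Fintype n] [DecidableEq n] :
    Matrix n n ℂ →ₗ[ℂ] Matrix n n ℂ where
  toFun X := Matrix.diagonal fun i => X i i
  map_add' X Y := by
    ext i j
    by_cases h : i = j <;> simp [Matrix.diagonal_apply, h]
  map_smul' c X := by
    ext i j
    by_cases h : i = j <;> simp [Matrix.diagonal_apply, h]

/-- The unitary channel `Φ_U(X) = U X Uᴴ`. -/
def unitaryChannel {n : Type*} [Fintype n] (U : Matrix n n ℂ) :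
    Matrix n n ℂ →ₗ[ℂ] Matrix n n ℂ where
  toFun X := U * X * Uᴴ
  map_add' X Y := by simp [Matrix.mul_add, Matrix.add_mul]
  map_smul' c X := by simp [mul_smul_comm, smul_mul_assoc]

/-- The von Neumann measurement channel `𝒫_U(σ) = Σ_i ⟨i|U† σ U|i⟩ |i⟩⟨i| = diag(U† σ U)`. -/
def measChannel {n : Type*} [Fintype n] [DecidableEq n] (U : Matrix n n ℂ) :
    Matrix n n ℂ →ₗ[ℂ] Matrix n n ℂ :=
  (dephaseMap n).comp (unitaryChannel Uᴴ)

/-- `N`-fold tensor (Kronecker) power of a matrix. -/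
def tensorPow {d : ℕ} (U : Matrix (Fin d) (Fin d) ℂ) (N : ℕ) :
    Matrix (Fin N → Fin d) (Fin N → Fin d) ℂ :=
  Matrix.of fun f g => ∏ k, U (f k) (g k)

/-- Tensor product of a family of `d × d` matrices. -/
def tensorFamily {d N : ℕ} (ρ : Fin N → Matrix (Fin d) (Fin d) ℂ) :
    Matrix (Fin N → Fin d) (Fin N → Fin d) ℂ :=
  Matrix.of fun f g => ∏ k, (ρ k) (f k) (g k)

/-- Density matrices. -/
def IsDensityMatrix {n : Type*} [Fintype n] (ρ : Matrix n n ℂ) : Prop :=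
  ρ.PosSemidef ∧ ρ.trace = 1

/-- The set of diagonal unitary matrices `𝒟𝒰`. -/
def diagUnitary (n : Type*) [Fintype n] [DecidableEq n] : Set (Matrix n n ℂ) :=
  { E | E ∈ Matrix.unitaryGroup n ℂ ∧ E.IsDiag }

/-- `Θ(U)`: the angle of the shortest arc of the unit circle containing all eigenvalues. -/
noncomputable def thetaArc {n : Type*} [Fintype n] [DecidableEq n] (U : Matrix n n ℂ) : ℝ :=
  sInf { t : ℝ | 0 ≤ t ∧ ∃ α : ℝ, ∀ lam ∈ spectrum ℂ U, ∃ s : ℝ, 0 ≤ s ∧ s ≤ t ∧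
    lam = Complex.exp (Complex.I * (↑α + ↑s)) }

/-- `Υ(U) = min_{E ∈ 𝒟𝒰} Θ(UE)`. -/
noncomputable def upsilonArc {n : Type*} [Fintype n] [DecidableEq n] (U : Matrix n n ℂ) : ℝ :=
  sInf { t : ℝ | ∃ E ∈ diagUnitary n, t = thetaArc (U * E) }

/-- Numerical range `W(A)`. -/
def numericalRange {n : Type*} [Fintype n] (A : Matrix n n ℂ) : Set ℂ :=
  { z | ∃ x : n → ℂ, (∑ i, ‖x i‖ ^ 2) = 1 ∧ z = star x ⬝ᵥ A.mulVec x }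

/-- minimal modulus over the numerical range -/
noncomputable def nuMin {n : Type*} [Fintype n] (A : Matrix n n ℂ) : ℝ :=
  sInf { r : ℝ | ∃ z ∈ numericalRange A, r = ‖z‖ }

/-- Operator (spectral) norm of a matrix. -/
noncomputable def opNorm {n : Type*} [Fintype n] [DecidableEq n] (A : Matrix n n ℂ) : ℝ :=
  ‖Matrix.toEuclideanCLM (𝕜 := ℂ) A‖

/-- Matrix of the orthogonal projection onto a subspace of `EuclideanSpace ℂ n`. -/
noncomputable def projMatrix {n : Type*} [Fintype n] [DecidableEq n]
    (K : Submodule ℂ (EuclideanSpace ℂ n)) : Matrix n n ℂ :=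
  Matrix.toEuclideanLin.symm (K.subtype ∘ₗ K.orthogonalProjectionOnto.toLinearMap)

/-- Matrix of the orthogonal projection onto the eigenspace of `A` for eigenvalue `lam`. -/
noncomputable def eigProj {n : Type*} [Fintype n] [DecidableEq n] (A : Matrix n n ℂ) (lam : ℂ) :
    Matrix n n ℂ :=
  projMatrix (Module.End.eigenspace (Matrix.toEuclideanLin A) lam)

end Paper

namespace Paper

/-- Optimal unambiguous discrimination probability of `𝒫_𝟙` vs `𝒫_U` without entanglement. -/
noncomputable def puNoEnt {n : Type*} [Fintype n] [DecidableEq n] (U : Matrix n n ℂ) : ℝ :=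
  sSup { t : ℝ | ∃ σ M₁ M₂ M₃ : Matrix n n ℂ,
    IsDensityMatrix σ ∧ M₁.PosSemidef ∧ M₂.PosSemidef ∧ M₃.PosSemidef ∧ M₁ + M₂ + M₃ = 1 ∧
    (M₂ * measChannel (1 : Matrix n n ℂ) σ).trace = 0 ∧
    (M₁ * measChannel U σ).trace = 0 ∧
    t = (1 / 2) * (((M₁ * measChannel (1 : Matrix n n ℂ) σ).trace).re +
                   ((M₂ * measChannel U σ).trace).re) }

/-- Optimal entanglement-assisted unambiguous discrimination probability of `𝒫_𝟙` vs `𝒫_U`. -/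
noncomputable def puEnt {n : Type*} [Fintype n] [DecidableEq n] (U : Matrix n n ℂ) : ℝ :=
  sSup { t : ℝ | ∃ (k : ℕ) (σ M₁ M₂ M₃ : Matrix (n × Fin (k + 1)) (n × Fin (k + 1)) ℂ),
    IsDensityMatrix σ ∧ M₁.PosSemidef ∧ M₂.PosSemidef ∧ M₃.PosSemidef ∧ M₁ + M₂ + M₃ = 1 ∧
    (M₂ * tensorApplyLeft (measChannel (1 : Matrix n n ℂ)) σ).trace = 0 ∧
    (M₁ * tensorApplyLeft (measChannel U) σ).trace = 0 ∧
    t = (1 / 2) * (((M₁ * tensorApplyLeft (measChannel (1 : Matrix n n ℂ)) σ).trace).re +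
                   ((M₂ * tensorApplyLeft (measChannel U) σ).trace).re) }

/-- `Π_A = Σ_{i ∈ A} |i⟩⟨i|`. -/
noncomputable def basisProj {n : Type*} [Fintype n] [DecidableEq n] (A : Finset n) :
    Matrix n n ℂ :=
  ∑ i ∈ A, Matrix.single i i (1 : ℂ)

/-- `ℙ_{Γ,Δ}`: projector onto `span{U|i⟩ : i ∈ Γᶜ} ∩ span{|j⟩ : j ∈ Δᶜ}`. -/
noncomputable def PGD {n : Type*} [Fintype n] [DecidableEq n] (U : Matrix n n ℂ)
    (Γ Δ : Finset n) : Matrix n n ℂ :=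
  projMatrix
    ((Submodule.span ℂ { v : EuclideanSpace ℂ n |
        ∃ i ∉ Γ, v = (WithLp.equiv 2 (n → ℂ)).symm (fun r => U r i) }) ⊓
     (Submodule.span ℂ { v : EuclideanSpace ℂ n |
        ∃ j ∉ Δ, v = (WithLp.equiv 2 (n → ℂ)).symm (Pi.single j 1) }))

/-- `W` acting on the `k`-th of `N` registers (identity elsewhere). -/
def actOn {d : ℕ} (N : ℕ) (W : Matrix (Fin d) (Fin d) ℂ) (k : ℕ) :
    Matrix (Fin N → Fin d) (Fin N → Fin d) ℂ :=
  Matrix.of fun f g => ∏ j : Fin N,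
    if (j : ℕ) = k then W (f j) (g j) else (if f j = g j then (1 : ℂ) else 0)

/-- A system operator extended by identity on the ancilla. -/
def sysOp {d N m : ℕ} (A : Matrix (Fin N → Fin d) (Fin N → Fin d) ℂ) :
    Matrix ((Fin N → Fin d) × Fin m) ((Fin N → Fin d) × Fin m) ℂ :=
  Matrix.of fun p q => A p.1 q.1 * (if p.2 = q.2 then (1 : ℂ) else 0)

/-- `C` is classically controlled on the first `k` registers, i.e. of the form
`Σ_{i₁,…,i_k} |i₁…i_k⟩⟨i₁…i_k| ⊗ V_{i₁…i_k}`. -/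
def ControlledOnFirst {d N m : ℕ} (k : ℕ)
    (C : Matrix ((Fin N → Fin d) × Fin m) ((Fin N → Fin d) × Fin m) ℂ) : Prop :=
  ∀ p q, (∃ j : Fin N, (j : ℕ) < k ∧ p.1 j ≠ q.1 j) → C p q = 0

/-- The sequential-scheme unitary
`A_W = (𝟙⊗…⊗W⊗𝟙ₘ)·C_{N-1}·…·C₁·(W⊗𝟙⊗…⊗𝟙ₘ)`. -/
noncomputable def seqUnitary {d N m : ℕ} (W : Matrix (Fin d) (Fin d) ℂ)
    (C : ℕ → Matrix ((Fin N → Fin d) × Fin m) ((Fin N → Fin d) × Fin m) ℂ) :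
    Matrix ((Fin N → Fin d) × Fin m) ((Fin N → Fin d) × Fin m) ℂ :=
  (((List.range (N - 1)).reverse.map fun j =>
      sysOp (actOn N W (j + 1)) * C (j + 1)).prod) * sysOp (actOn N W 0)

/-- Dephasing in the standard product basis on the first `N` registers only. -/
def dephaseFirst (d N m : ℕ) :
    Matrix ((Fin N → Fin d) × Fin m) ((Fin N → Fin d) × Fin m) ℂ →ₗ[ℂ]
    Matrix ((Fin N → Fin d) × Fin m) ((Fin N → Fin d) × Fin m) ℂ where
  toFun X := Matrix.of fun p q => if p.1 = q.1 then X p q else 0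
  map_add' X Y := by
    ext p q
    by_cases h : p.1 = q.1 <;> simp [h]
  map_smul' c X := by
    ext p q
    by_cases h : p.1 = q.1 <;> simp [h]

/-- The Hadamard matrix. -/
noncomputable def Hmat : Matrix (Fin 2) (Fin 2) ℂ :=
  (((1 : ℝ) / Real.sqrt 2 : ℝ) : ℂ) • !![1, 1; 1, -1]

/-- `ψ = (|1⟩⊗|1⟩ − |2⟩⊗|2⟩)/√2`. -/
noncomputable def psiVec : Fin 2 × Fin 2 → ℂ := fun p =>
  if p = (0, 0) then (((1 : ℝ) / Real.sqrt 2 : ℝ) : ℂ)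
  else if p = (1, 1) then -(((1 : ℝ) / Real.sqrt 2 : ℝ) : ℂ) else 0

/-- `ρ = |ψ⟩⟨ψ|`. -/
noncomputable def rhoPsi : Matrix (Fin 2 × Fin 2) (Fin 2 × Fin 2) ℂ :=
  Matrix.of fun p q => psiVec p * (starRingEnd ℂ) (psiVec q)

end Paper

namespace Paper


section AuxStmt14

open Complex Finset

variable {d : ℕ}

private lemma unitary_entry_abs_le_one {E : Matrix (Fin d) (Fin d) ℂ}
    (hE : E ∈ Matrix.unitaryGroup (Fin d) ℂ) (j : Fin d) : ‖E j j‖ ≤ 1 := by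
  have h := Matrix.mem_unitaryGroup_iff'.mp hE
  have h1 : ((star E * E) j j) = 1 := by rw [h]; simp [Matrix.one_apply]
  have h2 : (↑(∑ k, Complex.normSq (E k j)) : ℂ) = 1 := by
    rw [← h1, Matrix.mul_apply]
    push_cast
    refine Finset.sum_congr rfl fun k _ => ?_
    simp [Matrix.star_apply, Complex.normSq_eq_conj_mul_self]
  have h3 : (∑ k, Complex.normSq (E k j)) = 1 := by exact_mod_cast h2
  have h4 : Complex.normSq (E j j) ≤ 1 := by
    rw [← h3]
    exact Finset.single_le_sum (f := fun k => Complex.normSq (E k j))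
      (fun k _ => Complex.normSq_nonneg _) (Finset.mem_univ j)
  have h5 : (‖E j j‖) ^ 2 ≤ 1 := by rw [Complex.sq_norm]; exact h4
  nlinarith [norm_nonneg (E j j)]

private lemma trace_mul_isDiag {M E : Matrix (Fin d) (Fin d) ℂ} (hE : E.IsDiag) :
    (M * E).trace = ∑ j, M j j * E j j := by
  rw [Matrix.trace]
  refine Finset.sum_congr rfl fun i _ => ?_
  rw [Matrix.diag_apply, Matrix.mul_apply]
  exact Finset.sum_eq_single i (fun k _ hk => by rw [hE hk, mul_zero]) (by simp)

private lemma abs_trace_le_sum (ρ U' E : Matrix (Fin d) (Fin d) ℂ)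
    (hE : E ∈ diagUnitary (Fin d)) :
    ‖(ρ * (U' * E)).trace‖ ≤ ∑ j, ‖(ρ * U') j j‖ := by
  obtain ⟨hEu, hEd⟩ := hE
  rw [← Matrix.mul_assoc, trace_mul_isDiag hEd]
  calc ‖∑ j, (ρ * U') j j * E j j‖
      ≤ ∑ j, ‖(ρ * U') j j * E j j‖ := by
        exact norm_sum_le _ _
    _ ≤ ∑ j, ‖(ρ * U') j j‖ := by
        refine Finset.sum_le_sum fun j _ => ?_
        rw [norm_mul]
        exact mul_le_of_le_one_right (norm_nonneg _) (unitary_entry_abs_le_one hEu j)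

private lemma one_mem_diagUnitary : (1 : Matrix (Fin d) (Fin d) ℂ) ∈ diagUnitary (Fin d) := by
  exact ⟨one_mem _, Matrix.isDiag_one⟩

private lemma uniformDensity (hd : d ≠ 0) :
    IsDensityMatrix ((((d : ℝ)⁻¹ : ℝ) : ℂ) • (1 : Matrix (Fin d) (Fin d) ℂ)) := by
  have hd0 : (0 : ℝ) < (d : ℝ) := by
    exact_mod_cast Nat.pos_of_ne_zero hd
  constructor
  · rw [Matrix.smul_one_eq_diagonal]
    refine Matrix.PosSemidef.diagonal fun i => ?_
    refine Complex.zero_le_real.mpr ?_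
    positivity
  · rw [Matrix.trace_smul, Matrix.trace_one, smul_eq_mul, Fintype.card_fin]
    rw [← Complex.ofReal_natCast, ← Complex.ofReal_mul]
    rw [inv_mul_cancel₀ (ne_of_gt hd0)]
    simp

private lemma psd_trace_nonneg {M : Matrix (Fin d) (Fin d) ℂ} (hM : M.PosSemidef) :
    0 ≤ M.trace := by
  rw [Matrix.trace]
  refine Finset.sum_nonneg fun i _ => ?_
  have h := hM.dotProduct_mulVec_nonneg (Pi.single i 1)
  rw [Matrix.mulVec_single] at h
  have hs : star (Pi.single i (1:ℂ)) = (Pi.single i (1:ℂ) : Fin d → ℂ) := by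
    funext k
    rw [Pi.star_apply]
    by_cases hk : k = i
    · subst hk; simp
    · simp [Pi.single_eq_of_ne hk]
  rw [hs, single_dotProduct] at h
  simpa using h

private lemma psdSqrt_mul_self {A : Matrix (Fin d) (Fin d) ℂ} (hA : A.PosSemidef) :
    psdSqrt hA * psdSqrt hA = A := by
  unfold psdSqrt
  conv_rhs => rw [hA.1.spectral_theorem, Unitary.conjStarAlgAut_apply]
  have hWW : (star hA.1.eigenvectorUnitary : Matrix (Fin d) (Fin d) ℂ) *
      (hA.1.eigenvectorUnitary : Matrix (Fin d) (Fin d) ℂ) = 1 :=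
    Unitary.coe_star_mul_self _
  rw [show ∀ X Y Z X' Y' Z' : Matrix (Fin d) (Fin d) ℂ,
      X * Y * Z * (X' * Y' * Z') = X * (Y * (Z * X') * Y') * Z' from
    fun _ _ _ _ _ _ => by simp only [Matrix.mul_assoc]]
  rw [hWW, Matrix.mul_one, Matrix.diagonal_mul_diagonal]
  congr 2
  congr 1
  funext i
  have hsq := Real.mul_self_sqrt (hA.eigenvalues_nonneg i)
  show ((Real.sqrt _ : ℝ) : ℂ) * ((Real.sqrt _ : ℝ) : ℂ) = ((hA.1.eigenvalues i : ℝ) : ℂ)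
  rw [← Complex.ofReal_mul, hsq]

private lemma psdSqrt_psd {A : Matrix (Fin d) (Fin d) ℂ} (hA : A.PosSemidef) :
    (psdSqrt hA).PosSemidef := by
  unfold psdSqrt
  rw [Matrix.star_eq_conjTranspose]
  refine Matrix.PosSemidef.mul_mul_conjTranspose_same ?_ _
  refine Matrix.PosSemidef.diagonal fun i => ?_
  exact Complex.zero_le_real.mpr (Real.sqrt_nonneg _)

private lemma trace_mul_psd_nonneg {P A : Matrix (Fin d) (Fin d) ℂ} (hP : P.PosSemidef)
    (hA : A.PosSemidef) : 0 ≤ (P * A).trace := by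
  have h1 : P * A = P * psdSqrt hA * psdSqrt hA := by
    rw [Matrix.mul_assoc, psdSqrt_mul_self hA]
  rw [h1, Matrix.trace_mul_cycle]
  have hses : (psdSqrt hA * P * (psdSqrt hA)ᴴ).PosSemidef := hP.mul_mul_conjTranspose_same (psdSqrt hA)
  rw [(psdSqrt_psd hA).1.eq] at hses
  exact psd_trace_nonneg hses

private lemma outer_density {x : Fin d → ℂ} (hx : x ≠ 0) :
    IsDensityMatrix ((((∑ k, Complex.normSq (x k))⁻¹ : ℝ) : ℂ) •
      Matrix.vecMulVec x (star x)) := by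
  have hnrpos : 0 < ∑ k, Complex.normSq (x k) := by
    obtain ⟨k, hk⟩ : ∃ k, x k ≠ 0 := by
      by_contra h; push_neg at h; exact hx (funext h)
    exact Finset.sum_pos' (fun i _ => Complex.normSq_nonneg _)
      ⟨k, Finset.mem_univ k, Complex.normSq_pos.mpr hk⟩
  have hMv : ∀ y : Fin d → ℂ, Matrix.vecMulVec x (star x) *ᵥ y = (star x ⬝ᵥ y) • x := by
    intro y
    ext i
    simp only [Matrix.mulVec, Matrix.vecMulVec_apply, dotProduct, Pi.smul_apply,
      Pi.star_apply, smul_eq_mul, Finset.sum_mul, Finset.mul_sum]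
    exact Finset.sum_congr rfl fun k _ => by ring
  constructor
  · refine Matrix.PosSemidef.of_dotProduct_mulVec_nonneg ?_ ?_
    · ext i j
      simp only [Matrix.conjTranspose_apply, Matrix.smul_apply, Matrix.vecMulVec_apply,
        Pi.star_apply, star_mul', starRingEnd_apply, star_star, smul_eq_mul, star_smul]
      rw [Complex.star_def, Complex.conj_ofReal]
      ring
    · intro y
      have : star y ⬝ᵥ (((((∑ k, Complex.normSq (x k))⁻¹ : ℝ) : ℂ) •
          Matrix.vecMulVec x (star x)) *ᵥ y)
          = (((∑ k, Complex.normSq (x k))⁻¹ : ℝ) : ℂ) * Complex.normSq (star x ⬝ᵥ y) := by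
        rw [Matrix.smul_mulVec, dotProduct_smul, hMv, dotProduct_smul]
        have hsy : star y ⬝ᵥ x = starRingEnd ℂ (star x ⬝ᵥ y) := by
          simp only [dotProduct, starRingEnd_apply, star_sum, star_mul', star_star,
            Pi.star_apply]
          exact Finset.sum_congr rfl fun k _ => mul_comm _ _
        rw [smul_eq_mul, smul_eq_mul, hsy, Complex.mul_conj]
      rw [this]
      have h1 : (0:ℝ) ≤ (∑ k, Complex.normSq (x k))⁻¹ * Complex.normSq (star x ⬝ᵥ y) :=
        mul_nonneg (inv_nonneg.mpr (le_of_lt hnrpos)) (Complex.normSq_nonneg _)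
      rw [← Complex.ofReal_mul]
      exact Complex.zero_le_real.mpr h1
  · rw [Matrix.trace_smul]
    have htr : (Matrix.vecMulVec x (star x)).trace = ((∑ k, Complex.normSq (x k) : ℝ) : ℂ) := by
      rw [Matrix.trace]
      push_cast
      refine Finset.sum_congr rfl fun k _ => ?_
      rw [Matrix.diag_apply, Matrix.vecMulVec_apply, Pi.star_apply]
      simpa using Complex.mul_conj (x k)
    rw [htr, smul_eq_mul, ← Complex.ofReal_mul, inv_mul_cancel₀ (ne_of_gt hnrpos)]
    simp

private lemma diag_outer_mul (x : Fin d → ℂ) (U' : Matrix (Fin d) (Fin d) ℂ) (w : Fin d → ℂ) :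
    ∑ j, w j * ((Matrix.vecMulVec x (star x) * U') j j)
      = star x ⬝ᵥ (U' *ᵥ fun j => w j * x j) := by
  simp only [Matrix.mul_apply, Matrix.vecMulVec_apply, dotProduct, Matrix.mulVec,
    Pi.star_apply, Finset.mul_sum, Finset.sum_mul]
  rw [Finset.sum_comm]
  refine Finset.sum_congr rfl fun k _ => Finset.sum_congr rfl fun j _ => by ring

private lemma exists_w (U' : Matrix (Fin d) (Fin d) ℂ) {m : ℝ} (hm : 0 < m)
    (hmle : ∀ ρ : Matrix (Fin d) (Fin d) ℂ, IsDensityMatrix ρ → m ≤ ∑ j, ‖(ρ * U') j j‖) :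
    ∃ w : Fin d → ℂ, (∀ j, ‖w j‖ ≤ 1) ∧
      ∀ ρ : Matrix (Fin d) (Fin d) ℂ, IsDensityMatrix ρ → m ≤ (∑ j, w j * ((ρ * U') j j)).re := by
  classical
  set B : Set (Fin d → ℂ) := {z | ∑ j, ‖z j‖ < m} with hB
  set C : Set (Fin d → ℂ) := {z | ∃ ρ : Matrix (Fin d) (Fin d) ℂ,
      IsDensityMatrix ρ ∧ z = fun j => (ρ * U') j j} with hC
  have hBconv : Convex ℝ B := by
    intro z1 h1 z2 h2 a b ha hb hab
    simp only [hB, Set.mem_setOf_eq] at h1 h2 ⊢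
    have step1 : ∑ j, ‖(a • z1 + b • z2) j‖
        ≤ a * (∑ j, ‖z1 j‖) + b * (∑ j, ‖z2 j‖) := by
      rw [Finset.mul_sum, Finset.mul_sum, ← Finset.sum_add_distrib]
      refine Finset.sum_le_sum fun j _ => ?_
      simp only [Pi.add_apply, Pi.smul_apply]
      calc ‖a • z1 j + b • z2 j‖
          ≤ ‖a • z1 j‖ + ‖b • z2 j‖ := norm_add_le _ _
        _ = a * ‖z1 j‖ + b * ‖z2 j‖ := by
            rw [Complex.real_smul, Complex.real_smul, norm_mul, norm_mul,
              Complex.norm_real, Real.norm_eq_abs, Complex.norm_real, Real.norm_eq_abs, _root_.abs_of_nonneg ha,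
              _root_.abs_of_nonneg hb]
    refine lt_of_le_of_lt step1 ?_
    rcases eq_or_lt_of_le ha with h | h
    · have hb1 : b = 1 := by linarith
      rw [← h, hb1]; simpa using h2
    · have h1' : a * (∑ j, ‖z1 j‖) < a * m := (mul_lt_mul_iff_right₀ h).mpr h1
      have h2' : b * (∑ j, ‖z2 j‖) ≤ b * m :=
        mul_le_mul_of_nonneg_left (le_of_lt h2) hb
      have hsum : a * m + b * m = m := by rw [← add_mul, hab, one_mul]
      linarith
  have hBopen : IsOpen B := by
    have hcont : Continuous fun z : Fin d → ℂ => ∑ j, ‖z j‖ :=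
      continuous_finset_sum _ fun j _ => continuous_norm.comp (continuous_apply j)
    exact isOpen_lt hcont continuous_const
  have hCconv : Convex ℝ C := by
    rintro z1 ⟨ρ1, hρ1, rfl⟩ z2 ⟨ρ2, hρ2, rfl⟩ a b ha hb hab
    refine ⟨(a : ℂ) • ρ1 + (b : ℂ) • ρ2, ⟨Matrix.PosSemidef.of_dotProduct_mulVec_nonneg ?_ ?_, ?_⟩, ?_⟩
    · have hsm : ∀ (c : ℝ) (M : Matrix (Fin d) (Fin d) ℂ), M.IsHermitian →
          ((c : ℂ) • M).IsHermitian := by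
        intro c M h
        show ((c : ℂ) • M)ᴴ = (c : ℂ) • M
        rw [Matrix.conjTranspose_smul, Complex.star_def, Complex.conj_ofReal, h.eq]
      exact Matrix.IsHermitian.add (hsm a ρ1 hρ1.1.1) (hsm b ρ2 hρ2.1.1)
    · intro y
      rw [Matrix.add_mulVec, Matrix.smul_mulVec, Matrix.smul_mulVec,
        dotProduct_add, dotProduct_smul, dotProduct_smul,
        smul_eq_mul, smul_eq_mul]
      exact add_nonneg (mul_nonneg (Complex.zero_le_real.mpr ha) (hρ1.1.dotProduct_mulVec_nonneg y))
        (mul_nonneg (Complex.zero_le_real.mpr hb) (hρ2.1.dotProduct_mulVec_nonneg y))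
    · rw [Matrix.trace_add, Matrix.trace_smul, Matrix.trace_smul, hρ1.2, hρ2.2,
        smul_eq_mul, smul_eq_mul, mul_one, mul_one]
      exact_mod_cast congrArg (fun r : ℝ => (r : ℂ)) hab
    · funext j
      simp only [Pi.add_apply, Pi.smul_apply, Matrix.add_mul, Matrix.smul_mul,
        Matrix.add_apply, Matrix.smul_apply, Complex.real_smul, smul_eq_mul]
  have hdisj : Disjoint B C := by
    rw [Set.disjoint_left]
    rintro z hzB ⟨ρ, hρ, rfl⟩
    simp only [hB, Set.mem_setOf_eq] at hzB
    exact absurd (hmle ρ hρ) (not_le.mpr hzB)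
  obtain ⟨f, u, hfB, hfC⟩ := geometric_hahn_banach_open hBconv hBopen hCconv hdisj
  have hu0 : 0 < u := by
    have h0B : (0 : Fin d → ℂ) ∈ B := by simp [hB, hm]
    have h := hfB 0 h0B
    simpa using h
  set wh : Fin d → ℂ :=
    fun j => (f (Pi.single j 1) : ℂ) - (f (Pi.single j Complex.I) : ℂ) * Complex.I with hwh
  have hrep : ∀ z : Fin d → ℂ, f z = ∑ j, (wh j * z j).re := by
    intro z
    calc f z = f (∑ j, Pi.single j (z j)) := by rw [Finset.univ_sum_single]
      _ = ∑ j, f (Pi.single j (z j)) := map_sum f _ _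
      _ = ∑ j, (wh j * z j).re := by
          refine Finset.sum_congr rfl fun j _ => ?_
          have hzj : Pi.single j (z j) =
              (z j).re • (Pi.single j (1:ℂ) : Fin d → ℂ)
                + (z j).im • (Pi.single j Complex.I : Fin d → ℂ) := by
            funext k
            by_cases hk : k = j
            · subst hk
              simp only [Pi.add_apply, Pi.smul_apply, Pi.single_eq_same, smul_eq_mul,
                Complex.real_smul]
              rw [mul_one, Complex.re_add_im]
            · simp [Pi.single_eq_of_ne hk]
          rw [hzj, map_add, ContinuousLinearMap.map_smul, ContinuousLinearMap.map_smul, hwh]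
          simp only [smul_eq_mul, Complex.mul_re, Complex.sub_re, Complex.ofReal_re,
            Complex.mul_im, Complex.sub_im, Complex.ofReal_im, Complex.I_re, Complex.I_im]
          ring
  have hwb : ∀ j, m * ‖wh j‖ ≤ u := by
    intro j
    rcases eq_or_ne (wh j) 0 with h0 | h0
    · simp [h0]; exact le_of_lt hu0
    · by_contra hcon
      push_neg at hcon
      have habs : 0 < ‖wh j‖ := norm_pos_iff.mpr h0
      set r : ℝ := ‖wh j‖ with hr
      have hur : u / r < m := (div_lt_iff₀ habs).mpr (by linarith [hcon])
      set t : ℝ := (u / r + m) / 2 with htdef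
      have ht1 : u / r < t := by rw [htdef]; linarith
      have ht2 : t < m := by rw [htdef]; linarith
      have ht0 : 0 < t := lt_trans (by positivity) ht1
      set zz : Fin d → ℂ := Pi.single j ((t : ℂ) * starRingEnd ℂ (wh j) / (r : ℂ)) with hzz
      have hzzval : ‖zz j‖ = t := by
        rw [hzz, Pi.single_eq_same, norm_div, norm_mul, Complex.norm_real, Real.norm_eq_abs,
          Complex.norm_conj, Complex.norm_real, Real.norm_eq_abs, _root_.abs_of_nonneg (le_of_lt ht0),
          _root_.abs_of_nonneg (le_of_lt habs), ← hr]
        field_simp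
      have hzzB : zz ∈ B := by
        simp only [hB, Set.mem_setOf_eq]
        have : ∑ k, ‖zz k‖ = ‖zz j‖ := by
          refine Finset.sum_eq_single j (fun k _ hk => ?_) (by simp)
          rw [hzz, Pi.single_eq_of_ne hk, norm_zero]
        rw [this, hzzval]; exact ht2
      have hlt := hfB zz hzzB
      rw [hrep] at hlt
      have hfzz : ∑ k, (wh k * zz k).re = t * r := by
        have : ∀ k, k ≠ j → (wh k * zz k).re = 0 := by
          intro k hk; rw [hzz, Pi.single_eq_of_ne hk, mul_zero, Complex.zero_re]
        rw [Finset.sum_eq_single j (fun k _ hk => this k hk) (by simp)]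
        rw [hzz, Pi.single_eq_same]
        have hexp : wh j * ((t : ℂ) * starRingEnd ℂ (wh j) / (r : ℂ))
            = ((t / r * Complex.normSq (wh j) : ℝ) : ℂ) := by
          push_cast
          rw [← Complex.mul_conj]
          ring
        rw [hexp, Complex.ofReal_re, Complex.normSq_eq_norm_sq, ← hr]
        field_simp
      rw [hfzz] at hlt
      have : u < t * r := by
        have := (div_lt_iff₀ habs).mp ht1
        linarith
      linarith
  refine ⟨fun j => ((m / u : ℝ) : ℂ) * wh j, fun j => ?_, fun ρ hρ => ?_⟩
  · rw [norm_mul, Complex.norm_real, Real.norm_eq_abs, _root_.abs_of_nonneg (by positivity : (0:ℝ) ≤ m / u)]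
    rw [div_mul_eq_mul_div, div_le_one hu0]
    exact hwb j
  · have hfz := hfC _ ⟨ρ, hρ, rfl⟩
    rw [hrep] at hfz
    have hre : (∑ j, ((m / u : ℝ) : ℂ) * wh j * ((ρ * U') j j)).re
        = (m / u) * ∑ j, (wh j * ((ρ * U') j j)).re := by
      rw [Complex.re_sum, Finset.mul_sum]
      refine Finset.sum_congr rfl fun j _ => ?_
      rw [mul_assoc, Complex.re_ofReal_mul]
    rw [hre]
    calc m = (m / u) * u := by field_simp
      _ ≤ (m / u) * ∑ j, (wh j * ((ρ * U') j j)).re :=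
          mul_le_mul_of_nonneg_left hfz (by positivity)


private lemma eig_re_ge (V : Matrix (Fin d) (Fin d) ℂ)
    (hV : V ∈ Matrix.unitaryGroup (Fin d) ℂ) {m : ℝ} (hm : 0 < m) (c : Fin d → ℝ)
    (hc0 : ∀ j, 0 ≤ c j) (hc1 : ∀ j, c j ≤ 1)
    (hvec : ∀ x : Fin d → ℂ, x ≠ 0 →
      m * (∑ k, Complex.normSq (x k)) ≤ (star x ⬝ᵥ (V *ᵥ fun j => (c j : ℂ) * x j)).re)
    {lam : ℂ} {x : Fin d → ℂ} (hx : x ≠ 0) (hVx : V *ᵥ x = lam • x) : m ≤ lam.re := by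
  classical
  have hnr : 0 < ∑ k, Complex.normSq (x k) := by
    obtain ⟨k, hk⟩ : ∃ k, x k ≠ 0 := by
      by_contra h; push_neg at h; exact hx (funext h)
    exact Finset.sum_pos' (fun i _ => Complex.normSq_nonneg _)
      ⟨k, Finset.mem_univ k, Complex.normSq_pos.mpr hk⟩
  set nr : ℝ := ∑ k, Complex.normSq (x k) with hnrdef
  have hdot : star x ⬝ᵥ x = (nr : ℂ) := by
    rw [dotProduct, hnrdef]
    push_cast
    refine Finset.sum_congr rfl fun k _ => ?_
    rw [Pi.star_apply, Complex.normSq_eq_conj_mul_self, starRingEnd_apply]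
  have hVV : Vᴴ * V = 1 := by
    rw [← Matrix.star_eq_conjTranspose]
    exact Matrix.mem_unitaryGroup_iff'.mp hV
  have h1 : star (V *ᵥ x) ⬝ᵥ (V *ᵥ x) = (nr : ℂ) := by
    rw [Matrix.star_mulVec, ← Matrix.dotProduct_mulVec, Matrix.mulVec_mulVec, hVV,
      Matrix.one_mulVec, hdot]
  have h2 : star (V *ᵥ x) ⬝ᵥ (V *ᵥ x) = starRingEnd ℂ lam * (lam * (nr : ℂ)) := by
    rw [hVx, star_smul, smul_dotProduct, dotProduct_smul, hdot]
    rw [smul_eq_mul, smul_eq_mul, starRingEnd_apply]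
  have hnrne : (nr : ℂ) ≠ 0 := by
    simpa using ne_of_gt hnr
  have h3 : (Complex.normSq lam : ℂ) * (nr : ℂ) = (nr : ℂ) := by
    rw [Complex.normSq_eq_conj_mul_self, mul_assoc, ← h2, h1]
  have hnorm1 : Complex.normSq lam = 1 := by
    have h4 : ((Complex.normSq lam : ℝ) : ℂ) = 1 := mul_right_cancel₀ hnrne (by rw [h3, one_mul])
    exact_mod_cast h4
  have hlamne : lam ≠ 0 := by
    intro h; rw [h] at hnorm1; simp at hnorm1
  have hVHx : Vᴴ *ᵥ x = starRingEnd ℂ lam • x := by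
    have h5 : Vᴴ *ᵥ (V *ᵥ x) = x := by
      rw [Matrix.mulVec_mulVec, hVV, Matrix.one_mulVec]
    rw [hVx, Matrix.mulVec_smul] at h5
    have h6 : Vᴴ *ᵥ x = lam⁻¹ • x := by
      have h6' := congrArg (fun v => lam⁻¹ • v) h5
      simpa [smul_smul, inv_mul_cancel₀ hlamne] using h6'
    have h7 : lam⁻¹ = starRingEnd ℂ lam :=
      inv_eq_of_mul_eq_one_right (by rw [Complex.mul_conj, hnorm1]; simp)
    rw [h6, h7]
  have hrow : star x ᵥ* V = lam • star x := by
    have h8 : star (Vᴴ *ᵥ x) = star x ᵥ* V := by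
      rw [Matrix.star_mulVec, Matrix.conjTranspose_conjTranspose]
    rw [← h8, hVHx, star_smul, starRingEnd_apply, star_star]
  set cr : ℝ := ∑ k, c k * Complex.normSq (x k) with hcr
  have hdot2 : star x ⬝ᵥ (V *ᵥ fun j => (c j : ℂ) * x j) = lam * (cr : ℂ) := by
    rw [Matrix.dotProduct_mulVec, hrow, smul_dotProduct, smul_eq_mul]
    congr 1
    rw [dotProduct, hcr]
    push_cast
    refine Finset.sum_congr rfl fun k _ => ?_
    rw [Pi.star_apply, Complex.normSq_eq_conj_mul_self, starRingEnd_apply]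
    ring
  have hv := hvec x hx
  rw [hdot2] at hv
  have hre : (lam * (cr : ℂ)).re = lam.re * cr := by
    simp [Complex.mul_re]
  rw [hre] at hv
  have hcr0 : 0 ≤ cr :=
    Finset.sum_nonneg fun k _ => mul_nonneg (hc0 k) (Complex.normSq_nonneg _)
  have hcrle : cr ≤ nr := by
    refine Finset.sum_le_sum fun k _ => ?_
    have h9 := hc1 k
    nlinarith [Complex.normSq_nonneg (x k)]
  rcases le_or_gt lam.re 0 with hneg | hpos
  · exfalso
    nlinarith
  · have h7 : lam.re * cr ≤ lam.re * nr := mul_le_mul_of_nonneg_left hcrle (le_of_lt hpos)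
    have h8 : m * nr ≤ lam.re * nr := le_trans hv h7
    exact le_of_mul_le_mul_right h8 hnr


private lemma unitary_adj_eig {V : Matrix (Fin d) (Fin d) ℂ}
    (hV : V ∈ Matrix.unitaryGroup (Fin d) ℂ) {lam : ℂ} {x : Fin d → ℂ} (hx : x ≠ 0)
    (hVx : V *ᵥ x = lam • x) : Vᴴ *ᵥ x = starRingEnd ℂ lam • x := by
  classical
  have hnr : 0 < ∑ k, Complex.normSq (x k) := by
    obtain ⟨k, hk⟩ : ∃ k, x k ≠ 0 := by
      by_contra h; push_neg at h; exact hx (funext h)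
    exact Finset.sum_pos' (fun i _ => Complex.normSq_nonneg _)
      ⟨k, Finset.mem_univ k, Complex.normSq_pos.mpr hk⟩
  set nr : ℝ := ∑ k, Complex.normSq (x k) with hnrdef
  have hdot : star x ⬝ᵥ x = (nr : ℂ) := by
    rw [dotProduct, hnrdef]
    push_cast
    refine Finset.sum_congr rfl fun k _ => ?_
    rw [Pi.star_apply, Complex.normSq_eq_conj_mul_self, starRingEnd_apply]
  have hVV : Vᴴ * V = 1 := by
    rw [← Matrix.star_eq_conjTranspose]
    exact Matrix.mem_unitaryGroup_iff'.mp hV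
  have h1 : star (V *ᵥ x) ⬝ᵥ (V *ᵥ x) = (nr : ℂ) := by
    rw [Matrix.star_mulVec, ← Matrix.dotProduct_mulVec, Matrix.mulVec_mulVec, hVV,
      Matrix.one_mulVec, hdot]
  have h2 : star (V *ᵥ x) ⬝ᵥ (V *ᵥ x) = starRingEnd ℂ lam * (lam * (nr : ℂ)) := by
    rw [hVx, star_smul, smul_dotProduct, dotProduct_smul, hdot]
    rw [smul_eq_mul, smul_eq_mul, starRingEnd_apply]
  have hnrne : (nr : ℂ) ≠ 0 := by simpa using ne_of_gt hnr
  have h3 : (Complex.normSq lam : ℂ) * (nr : ℂ) = (nr : ℂ) := by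
    rw [Complex.normSq_eq_conj_mul_self, mul_assoc, ← h2, h1]
  have hnorm1 : Complex.normSq lam = 1 := by
    have h4 : ((Complex.normSq lam : ℝ) : ℂ) = 1 := mul_right_cancel₀ hnrne (by rw [h3, one_mul])
    exact_mod_cast h4
  have hlamne : lam ≠ 0 := by intro h; rw [h] at hnorm1; simp at hnorm1
  have h5 : Vᴴ *ᵥ (V *ᵥ x) = x := by
    rw [Matrix.mulVec_mulVec, hVV, Matrix.one_mulVec]
  rw [hVx, Matrix.mulVec_smul] at h5
  have h6 : Vᴴ *ᵥ x = lam⁻¹ • x := by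
    have h6' := congrArg (fun v => lam⁻¹ • v) h5
    simpa [smul_smul, inv_mul_cancel₀ hlamne] using h6'
  have h7 : lam⁻¹ = starRingEnd ℂ lam :=
    inv_eq_of_mul_eq_one_right (by rw [Complex.mul_conj, hnorm1]; simp)
  rw [h6, h7]

private lemma herm_eig_ge (V : Matrix (Fin d) (Fin d) ℂ)
    (hV : V ∈ Matrix.unitaryGroup (Fin d) ℂ) {m : ℝ} (hm : 0 < m)
    (hH : (V + Vᴴ).IsHermitian)
    (heig : ∀ (lam : ℂ) (x : Fin d → ℂ), x ≠ 0 → V *ᵥ x = lam • x → m ≤ lam.re) :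
    ∀ i, 2 * m ≤ hH.eigenvalues i := by
  classical
  intro i
  set H : Matrix (Fin d) (Fin d) ℂ := V + Vᴴ with hHdef
  set W : Matrix (Fin d) (Fin d) ℂ := (Matrix.IsHermitian.eigenvectorUnitary hH : Matrix (Fin d) (Fin d) ℂ) with hWdef
  have hWW : star W * W = 1 := Matrix.mem_unitaryGroup_iff'.mp (SetLike.coe_mem _)
  set v : Fin d → ℂ := W *ᵥ Pi.single i 1 with hvdef
  set μ : ℂ := ((hH.eigenvalues i : ℝ) : ℂ) with hμdef
  have hspec := hH.spectral_theorem
  rw [Unitary.conjStarAlgAut_apply] at hspec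
  have hHv : H *ᵥ v = μ • v := by
    rw [hvdef, Matrix.mulVec_mulVec, hspec]
    rw [Matrix.mul_assoc, Matrix.mul_assoc, ← hWdef, hWW, Matrix.mul_one]
    rw [← Matrix.mulVec_mulVec]
    rw [Matrix.diagonal_mulVec_single]
    have : (Pi.single i ((RCLike.ofReal ∘ hH.eigenvalues) i * 1) : Fin d → ℂ)
        = μ • (Pi.single i 1 : Fin d → ℂ) := by
      funext k
      by_cases hk : k = i
      · subst hk; simp [hμdef, RCLike.ofReal]
      · simp [Pi.single_eq_of_ne hk]
    rw [this, Matrix.mulVec_smul]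
  have hvne : v ≠ 0 := by
    intro hcon
    have hW1 : (star W * W) i i = 1 := by rw [hWW]; simp [Matrix.one_apply]
    have hW2 : (star W * W) i i = star v ⬝ᵥ v := by
      rw [Matrix.mul_apply, dotProduct]
      refine Finset.sum_congr rfl fun k _ => ?_
      rw [Matrix.star_apply, Pi.star_apply, hvdef, Matrix.mulVec_single]
      simp [Matrix.star_apply]
    rw [hW2, hcon] at hW1
    simp at hW1
  set S : Submodule ℂ (Fin d → ℂ) := Module.End.eigenspace (Matrix.mulVecLin H) μ with hSdef
  have hvS : v ∈ S := by
    rw [hSdef, Module.End.mem_eigenspace_iff, Matrix.mulVecLin_apply]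
    exact hHv
  haveI : Nontrivial S := by
    refine nontrivial_of_ne ⟨v, hvS⟩ 0 ?_
    intro hcon
    exact hvne (congrArg Subtype.val hcon)
  have hVV' : V * Vᴴ = Vᴴ * V := by
    rw [← Matrix.star_eq_conjTranspose]
    rw [Matrix.mem_unitaryGroup_iff.mp hV, Matrix.mem_unitaryGroup_iff'.mp hV]
  have hcomm : V * H = H * V := by
    rw [hHdef, Matrix.mul_add, Matrix.add_mul, hVV']
  have hinv : ∀ xx ∈ S, Matrix.mulVecLin V xx ∈ S := by
    intro xx hxx
    rw [hSdef, Module.End.mem_eigenspace_iff] at hxx ⊢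
    simp only [Matrix.mulVecLin_apply] at hxx ⊢
    rw [Matrix.mulVec_mulVec, ← hcomm, ← Matrix.mulVec_mulVec, hxx, Matrix.mulVec_smul]
  set VS : Module.End ℂ S := (Matrix.mulVecLin V).restrict hinv with hVSdef
  obtain ⟨lam, hlam⟩ := Module.End.exists_eigenvalue VS
  obtain ⟨xs, hxs⟩ := hlam.exists_hasEigenvector
  have hxne : (xs : Fin d → ℂ) ≠ 0 := by
    intro hcon
    exact hxs.2 (by exact_mod_cast Subtype.ext hcon)
  have hVxs : V *ᵥ (xs : Fin d → ℂ) = lam • (xs : Fin d → ℂ) := by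
    have h10 := hxs.apply_eq_smul
    have h11 := congrArg Subtype.val h10
    have h12 : (Matrix.mulVecLin V) (xs : Fin d → ℂ) = lam • (xs : Fin d → ℂ) := by
      simpa [hVSdef, LinearMap.restrict_coe_apply] using h11
    rw [Matrix.mulVecLin_apply] at h12
    exact h12
  have hHxs : H *ᵥ (xs : Fin d → ℂ) = μ • (xs : Fin d → ℂ) := by
    have h12 : (xs : Fin d → ℂ) ∈ Module.End.eigenspace (Matrix.mulVecLin H) μ := xs.2
    rw [Module.End.mem_eigenspace_iff] at h12
    simpa only [Matrix.mulVecLin_apply] using h12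
  have hadj : Vᴴ *ᵥ (xs : Fin d → ℂ) = starRingEnd ℂ lam • (xs : Fin d → ℂ) :=
    unitary_adj_eig hV hxne hVxs
  have hsum : H *ᵥ (xs : Fin d → ℂ) = (lam + starRingEnd ℂ lam) • (xs : Fin d → ℂ) := by
    rw [hHdef, Matrix.add_mulVec, hVxs, hadj, add_smul]
  have hμeq : μ = lam + starRingEnd ℂ lam := by
    have h13 : (μ - (lam + starRingEnd ℂ lam)) • (xs : Fin d → ℂ) = 0 := by
      rw [sub_smul, ← hHxs, hsum, sub_self]
    rcases smul_eq_zero.mp h13 with h | h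
    · exact sub_eq_zero.mp h
    · exact absurd h hxne
  have hre : hH.eigenvalues i = 2 * lam.re := by
    have h14 : μ = ((2 * lam.re : ℝ) : ℂ) := by rw [hμeq, Complex.add_conj]
    rw [hμdef] at h14
    exact_mod_cast h14
  have hmre := heig lam (xs : Fin d → ℂ) hxne hVxs
  rw [hre]
  linarith


private lemma psd_of_herm_eig (H : Matrix (Fin d) (Fin d) ℂ) (hH : H.IsHermitian) {t : ℝ}
    (h : ∀ i, t ≤ hH.eigenvalues i) : (H - (t : ℂ) • 1).PosSemidef := by
  classical
  have hspec := hH.spectral_theorem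
  rw [Unitary.conjStarAlgAut_apply] at hspec
  set W : Matrix (Fin d) (Fin d) ℂ :=
    (Matrix.IsHermitian.eigenvectorUnitary hH : Matrix (Fin d) (Fin d) ℂ) with hWdef
  have hWW : W * Wᴴ = 1 := by
    rw [← Matrix.star_eq_conjTranspose]
    exact Matrix.mem_unitaryGroup_iff.mp (SetLike.coe_mem _)
  have hspec' : H = W * Matrix.diagonal (RCLike.ofReal ∘ hH.eigenvalues) * Wᴴ := by
    rw [hWdef, ← Matrix.star_eq_conjTranspose]
    exact hspec
  have h1 : ((t : ℂ) • (1 : Matrix (Fin d) (Fin d) ℂ)) = W * ((t : ℂ) • 1) * Wᴴ := by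
    rw [Matrix.mul_smul, Matrix.mul_one, Matrix.smul_mul, hWW]
  have hkey : H - (t : ℂ) • 1
      = W * Matrix.diagonal (fun i => ((hH.eigenvalues i - t : ℝ) : ℂ)) * Wᴴ := by
    calc H - (t : ℂ) • 1
        = W * Matrix.diagonal (RCLike.ofReal ∘ hH.eigenvalues) * Wᴴ - W * ((t : ℂ) • 1) * Wᴴ := by
          rw [← h1, ← hspec']
      _ = W * (Matrix.diagonal (RCLike.ofReal ∘ hH.eigenvalues) - (t : ℂ) • 1) * Wᴴ := by
          rw [Matrix.mul_sub, Matrix.sub_mul]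
      _ = W * Matrix.diagonal (fun i => ((hH.eigenvalues i - t : ℝ) : ℂ)) * Wᴴ := by
          rw [Matrix.smul_one_eq_diagonal, Matrix.diagonal_sub]
          congr 1
          congr 1
          funext i
          push_cast
          rfl
  rw [hkey]
  refine Matrix.PosSemidef.mul_mul_conjTranspose_same ?_ W
  refine Matrix.posSemidef_diagonal_iff.mpr fun i => ?_
  exact Complex.zero_le_real.mpr (sub_nonneg.mpr (h i))


private lemma re_trace_ge (V ρ : Matrix (Fin d) (Fin d) ℂ) {m : ℝ}
    (hpsd : ((V + Vᴴ) - ((2 * m : ℝ) : ℂ) • 1).PosSemidef)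
    (hρ : IsDensityMatrix ρ) : m ≤ ((ρ * V).trace).re := by
  obtain ⟨hρpsd, hρtr⟩ := hρ
  have h0 : 0 ≤ (ρ * ((V + Vᴴ) - ((2 * m : ℝ) : ℂ) • 1)).trace :=
    trace_mul_psd_nonneg hρpsd hpsd
  have hexpand : (ρ * ((V + Vᴴ) - ((2 * m : ℝ) : ℂ) • 1)).trace
      = (ρ * V).trace + (ρ * Vᴴ).trace - ((2 * m : ℝ) : ℂ) := by
    rw [Matrix.mul_sub, Matrix.mul_add, Matrix.trace_sub, Matrix.trace_add]
    rw [Matrix.mul_smul, Matrix.mul_one, Matrix.trace_smul, hρtr, smul_eq_mul, mul_one]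
  have hconj : (ρ * Vᴴ).trace = starRingEnd ℂ ((ρ * V).trace) := by
    calc (ρ * Vᴴ).trace = ((V * ρ)ᴴ).trace := by
          rw [Matrix.conjTranspose_mul, hρpsd.1.eq]
      _ = star ((V * ρ).trace) := Matrix.trace_conjTranspose _
      _ = starRingEnd ℂ ((ρ * V).trace) := by rw [Matrix.trace_mul_comm]; rfl
  have hsum : (ρ * V).trace + starRingEnd ℂ ((ρ * V).trace)
      = ((2 * ((ρ * V).trace).re : ℝ) : ℂ) := by
    rw [Complex.add_conj]
  rw [hexpand, hconj, hsum] at h0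
  rw [← Complex.ofReal_sub] at h0
  have h2 := Complex.zero_le_real.mp h0
  linarith


private lemma exists_good_E (U' : Matrix (Fin d) (Fin d) ℂ)
    (hU' : U' ∈ Matrix.unitaryGroup (Fin d) ℂ) {m : ℝ} (hm : 0 < m) (w : Fin d → ℂ)
    (hw : ∀ j, ‖w j‖ ≤ 1)
    (hkey : ∀ ρ : Matrix (Fin d) (Fin d) ℂ, IsDensityMatrix ρ → m ≤ (∑ j, w j * ((ρ * U') j j)).re) :
    ∃ E ∈ diagUnitary (Fin d), ∀ ρ : Matrix (Fin d) (Fin d) ℂ, IsDensityMatrix ρ →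
      m ≤ ‖(ρ * (U' * E)).trace‖ := by
  classical
  set ε : Fin d → ℂ := fun j => if w j = 0 then 1 else w j / (‖w j‖ : ℂ) with hε
  have hεabs : ∀ j, ‖ε j‖ = 1 := by
    intro j
    by_cases h : w j = 0
    · simp [hε, h]
    · have habs : ‖w j‖ ≠ 0 := fun hc => h (norm_eq_zero.mp hc)
      simp only [hε, if_neg h, norm_div, Complex.norm_real, Real.norm_eq_abs,
        _root_.abs_of_nonneg (norm_nonneg (w j))]
      exact div_self habs
  set c : Fin d → ℝ := fun j => ‖w j‖ with hc
  have hwc : ∀ j, w j = (c j : ℂ) * ε j := by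
    intro j
    by_cases h : w j = 0
    · simp [hε, hc, h]
    · have habs : (‖w j‖ : ℂ) ≠ 0 := by
        simp only [ne_eq, Complex.ofReal_eq_zero]
        exact fun hcc => h (norm_eq_zero.mp hcc)
      simp only [hε, hc, if_neg h]
      field_simp
  have hc0 : ∀ j, 0 ≤ c j := by
    intro j; rw [hc]; exact norm_nonneg (w j)
  have hc1 : ∀ j, c j ≤ 1 := by
    intro j; rw [hc]; exact hw j
  set E : Matrix (Fin d) (Fin d) ℂ := Matrix.diagonal ε with hE
  have hEuni : E ∈ Matrix.unitaryGroup (Fin d) ℂ := by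
    rw [Matrix.mem_unitaryGroup_iff']
    rw [hE, Matrix.star_eq_conjTranspose, Matrix.diagonal_conjTranspose,
      Matrix.diagonal_mul_diagonal]
    have hfun : (fun i => star ε i * ε i) = fun _ => (1 : ℂ) := by
      funext j
      have h1 : Complex.normSq (ε j) = 1 := by
        rw [← Complex.sq_norm, hεabs]; norm_num
      rw [Pi.star_apply, ← starRingEnd_apply, ← Complex.normSq_eq_conj_mul_self, h1]
      simp
    rw [hfun, Matrix.diagonal_one]
  have hEmem : E ∈ diagUnitary (Fin d) := ⟨hEuni, hE ▸ Matrix.isDiag_diagonal ε⟩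
  set V : Matrix (Fin d) (Fin d) ℂ := U' * E with hV
  have hVmem : V ∈ Matrix.unitaryGroup (Fin d) ℂ := mul_mem hU' hEuni
  have hvec : ∀ x : Fin d → ℂ, x ≠ 0 →
      m * (∑ k, Complex.normSq (x k)) ≤ (star x ⬝ᵥ (V *ᵥ fun j => (c j : ℂ) * x j)).re := by
    intro x hx
    have hnr : 0 < ∑ k, Complex.normSq (x k) := by
      obtain ⟨k, hk⟩ : ∃ k, x k ≠ 0 := by
        by_contra h; push_neg at h; exact hx (funext h)
      exact Finset.sum_pos' (fun i _ => Complex.normSq_nonneg _)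
        ⟨k, Finset.mem_univ k, Complex.normSq_pos.mpr hk⟩
    set nr : ℝ := ∑ k, Complex.normSq (x k) with hnrdef
    have hkx := hkey _ (outer_density hx)
    have hid : ∀ j, ((((nr⁻¹ : ℝ) : ℂ) • Matrix.vecMulVec x (star x) * U') j j)
        = ((nr⁻¹ : ℝ) : ℂ) * ((Matrix.vecMulVec x (star x) * U') j j) := by
      intro j
      rw [Matrix.smul_mul, Matrix.smul_apply, smul_eq_mul]
    have hsum1 : (∑ j, w j * ((((nr⁻¹ : ℝ) : ℂ) • Matrix.vecMulVec x (star x) * U') j j))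
        = ((nr⁻¹ : ℝ) : ℂ) * (star x ⬝ᵥ (U' *ᵥ fun j => w j * x j)) := by
      rw [← diag_outer_mul x U' w, Finset.mul_sum]
      refine Finset.sum_congr rfl fun j _ => ?_
      rw [hid j]; ring
    have hmv : (U' *ᵥ fun j => w j * x j) = V *ᵥ fun j => (c j : ℂ) * x j := by
      rw [hV, ← Matrix.mulVec_mulVec, hE]
      have hcomp : (Matrix.diagonal ε *ᵥ fun j => (c j : ℂ) * x j) = fun j => w j * x j := by
        funext j
        rw [Matrix.mulVec_diagonal, hwc j]
        ring
      rw [hcomp]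
    rw [← hnrdef] at hkx
    rw [hsum1, hmv, Complex.re_ofReal_mul] at hkx
    have h20 := mul_le_mul_of_nonneg_right hkx (le_of_lt hnr)
    calc m * nr
        ≤ nr⁻¹ * (star x ⬝ᵥ (V *ᵥ fun j => (c j : ℂ) * x j)).re * nr := h20
      _ = (star x ⬝ᵥ (V *ᵥ fun j => (c j : ℂ) * x j)).re := by field_simp
  have heig : ∀ (lam : ℂ) (x : Fin d → ℂ), x ≠ 0 → V *ᵥ x = lam • x → m ≤ lam.re :=
    fun lam x hx hVx => eig_re_ge V hVmem hm c hc0 hc1 hvec hx hVx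
  have hH : (V + Vᴴ).IsHermitian := by
    show (V + Vᴴ)ᴴ = V + Vᴴ
    rw [Matrix.conjTranspose_add, Matrix.conjTranspose_conjTranspose, add_comm]
  have h2m := herm_eig_ge V hVmem hm hH heig
  have hpsd := psd_of_herm_eig (V + Vᴴ) hH (t := 2 * m) h2m
  have hpsd' : ((V + Vᴴ) - ((2 * m : ℝ) : ℂ) • 1).PosSemidef := hpsd
  refine ⟨E, hEmem, fun ρ hρ => ?_⟩
  have hre := re_trace_ge V ρ hpsd' hρ
  calc m ≤ ((ρ * V).trace).re := hre
    _ ≤ ‖(ρ * V).trace‖ := Complex.re_le_norm _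
    _ = ‖(ρ * (U' * E)).trace‖ := by rw [hV]


end AuxStmt14

theorem stmt14 (d : ℕ) (U : Matrix (Fin d) (Fin d) ℂ)
    (hU : U ∈ Matrix.unitaryGroup (Fin d) ℂ) :
    sSup { t : ℝ | ∃ E ∈ diagUnitary (Fin d), t =
      sInf { s : ℝ | ∃ ρ : Matrix (Fin d) (Fin d) ℂ, IsDensityMatrix ρ ∧
        s = ‖(ρ * (U * E)).trace‖ } } =
    sInf { s : ℝ | ∃ ρ : Matrix (Fin d) (Fin d) ℂ, IsDensityMatrix ρ ∧
      s = sSup { t : ℝ | ∃ E ∈ diagUnitary (Fin d),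
        t = ‖(ρ * (U * E)).trace‖ } } := by
  classical
  by_cases hd : d = 0
  · subst hd
    have hnoρ : ∀ ρ : Matrix (Fin 0) (Fin 0) ℂ, ¬ IsDensityMatrix ρ := by
      intro ρ hρ
      have h1 := hρ.2
      rw [Matrix.trace] at h1
      simp at h1
    have hL : { t : ℝ | ∃ E ∈ diagUnitary (Fin 0), t =
        sInf { s : ℝ | ∃ ρ : Matrix (Fin 0) (Fin 0) ℂ, IsDensityMatrix ρ ∧
          s = ‖(ρ * (U * E)).trace‖ } } = {0} := by
      ext t
      simp only [Set.mem_setOf_eq, Set.mem_singleton_iff]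
      have hempty : ∀ E : Matrix (Fin 0) (Fin 0) ℂ,
          { s : ℝ | ∃ ρ : Matrix (Fin 0) (Fin 0) ℂ, IsDensityMatrix ρ ∧
            s = ‖(ρ * (U * E)).trace‖ } = ∅ := by
        intro E
        ext s
        simp only [Set.mem_setOf_eq, Set.mem_empty_iff_false, iff_false, not_exists]
        exact fun ρ h => absurd h.1 (hnoρ ρ)
      constructor
      · rintro ⟨E, hE, rfl⟩
        rw [hempty E, Real.sInf_empty]
      · rintro rfl
        exact ⟨1, one_mem_diagUnitary, by rw [hempty 1, Real.sInf_empty]⟩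
    have hR : { s : ℝ | ∃ ρ : Matrix (Fin 0) (Fin 0) ℂ, IsDensityMatrix ρ ∧
        s = sSup { t : ℝ | ∃ E ∈ diagUnitary (Fin 0),
          t = ‖(ρ * (U * E)).trace‖ } } = ∅ := by
      ext s
      simp only [Set.mem_setOf_eq, Set.mem_empty_iff_false, iff_false, not_exists]
      exact fun ρ h => absurd h.1 (hnoρ ρ)
    rw [hL, hR, csSup_singleton, Real.sInf_empty]
  · obtain ⟨ρ₀, hρ₀⟩ : ∃ ρ : Matrix (Fin d) (Fin d) ℂ, IsDensityMatrix ρ :=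
      ⟨_, uniformDensity hd⟩
    have hFsetbdd : ∀ ρ : Matrix (Fin d) (Fin d) ℂ, BddAbove
        { t : ℝ | ∃ E ∈ diagUnitary (Fin d), t = ‖(ρ * (U * E)).trace‖ } := by
      intro ρ
      refine ⟨∑ j, ‖(ρ * U) j j‖, ?_⟩
      rintro t ⟨E, hE, rfl⟩
      exact abs_trace_le_sum ρ U E hE
    have hFsetne : ∀ ρ : Matrix (Fin d) (Fin d) ℂ,
        Set.Nonempty { t : ℝ | ∃ E ∈ diagUnitary (Fin d),
          t = ‖(ρ * (U * E)).trace‖ } :=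
      fun ρ => ⟨_, 1, one_mem_diagUnitary, rfl⟩
    have hFle : ∀ ρ : Matrix (Fin d) (Fin d) ℂ,
        sSup { t : ℝ | ∃ E ∈ diagUnitary (Fin d), t = ‖(ρ * (U * E)).trace‖ }
          ≤ ∑ j, ‖(ρ * U) j j‖ := by
      intro ρ
      refine csSup_le (hFsetne ρ) ?_
      rintro t ⟨E, hE, rfl⟩
      exact abs_trace_le_sum ρ U E hE
    have hFge : ∀ (ρ : Matrix (Fin d) (Fin d) ℂ) (E : Matrix (Fin d) (Fin d) ℂ),
        E ∈ diagUnitary (Fin d) → ‖(ρ * (U * E)).trace‖ ≤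
          sSup { t : ℝ | ∃ E ∈ diagUnitary (Fin d),
            t = ‖(ρ * (U * E)).trace‖ } :=
      fun ρ E hE => le_csSup (hFsetbdd ρ) ⟨E, hE, rfl⟩
    set Rset : Set ℝ := { s : ℝ | ∃ ρ : Matrix (Fin d) (Fin d) ℂ, IsDensityMatrix ρ ∧
      s = sSup { t : ℝ | ∃ E ∈ diagUnitary (Fin d),
        t = ‖(ρ * (U * E)).trace‖ } } with hRset
    have hRne : Rset.Nonempty := ⟨_, ρ₀, hρ₀, rfl⟩
    have hRbdd : BddBelow Rset := by
      refine ⟨0, ?_⟩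
      rintro s ⟨ρ, hρ, rfl⟩
      exact le_trans (norm_nonneg _) (hFge ρ 1 one_mem_diagUnitary)
    set m : ℝ := sInf Rset with hmdef
    have hm0 : 0 ≤ m := by
      refine le_csInf hRne ?_
      rintro s ⟨ρ, hρ, rfl⟩
      exact le_trans (norm_nonneg _) (hFge ρ 1 one_mem_diagUnitary)
    have hmleN : ∀ ρ : Matrix (Fin d) (Fin d) ℂ, IsDensityMatrix ρ →
        m ≤ ∑ j, ‖(ρ * U) j j‖ := by
      intro ρ hρ
      exact le_trans (csInf_le hRbdd ⟨ρ, hρ, rfl⟩) (hFle ρ)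
    have hEstar : ∃ E ∈ diagUnitary (Fin d), ∀ ρ : Matrix (Fin d) (Fin d) ℂ,
        IsDensityMatrix ρ → m ≤ ‖(ρ * (U * E)).trace‖ := by
      rcases eq_or_lt_of_le hm0 with h0 | hpos
      · exact ⟨1, one_mem_diagUnitary, fun ρ hρ => by
          rw [← h0]; exact norm_nonneg _⟩
      · obtain ⟨w, hw1, hw2⟩ := exists_w U hpos hmleN
        exact exists_good_E U hU hpos w hw1 hw2
    obtain ⟨E', hE', hE'all⟩ := hEstar
    have hgne : ∀ E : Matrix (Fin d) (Fin d) ℂ,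
        Set.Nonempty { s : ℝ | ∃ ρ : Matrix (Fin d) (Fin d) ℂ, IsDensityMatrix ρ ∧
          s = ‖(ρ * (U * E)).trace‖ } :=
      fun E => ⟨_, ρ₀, hρ₀, rfl⟩
    have hgbdd : ∀ E : Matrix (Fin d) (Fin d) ℂ,
        BddBelow { s : ℝ | ∃ ρ : Matrix (Fin d) (Fin d) ℂ, IsDensityMatrix ρ ∧
          s = ‖(ρ * (U * E)).trace‖ } := by
      intro E
      refine ⟨0, ?_⟩
      rintro s ⟨ρ, hρ, rfl⟩
      exact norm_nonneg _
    have hub : ∀ t ∈ { t : ℝ | ∃ E ∈ diagUnitary (Fin d), t =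
        sInf { s : ℝ | ∃ ρ : Matrix (Fin d) (Fin d) ℂ, IsDensityMatrix ρ ∧
          s = ‖(ρ * (U * E)).trace‖ } }, t ≤ m := by
      rintro t ⟨E, hE, rfl⟩
      refine le_csInf hRne ?_
      rintro s ⟨ρ, hρ, rfl⟩
      calc sInf { s : ℝ | ∃ ρ : Matrix (Fin d) (Fin d) ℂ, IsDensityMatrix ρ ∧
            s = ‖(ρ * (U * E)).trace‖ }
          ≤ ‖(ρ * (U * E)).trace‖ := csInf_le (hgbdd E) ⟨ρ, hρ, rfl⟩
        _ ≤ _ := hFge ρ E hE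
    have hE'val : m ≤ sInf { s : ℝ | ∃ ρ : Matrix (Fin d) (Fin d) ℂ, IsDensityMatrix ρ ∧
        s = ‖(ρ * (U * E')).trace‖ } := by
      refine le_csInf (hgne E') ?_
      rintro s ⟨ρ, hρ, rfl⟩
      exact hE'all ρ hρ
    apply le_antisymm
    · exact csSup_le ⟨_, 1, one_mem_diagUnitary, rfl⟩ hub
    · exact le_trans hE'val (le_csSup ⟨m, hub⟩ ⟨E', hE', rfl⟩)


end Paper
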